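/- Let (U_k)_{k≥1} be i.i.d. with P(U_k = ±1) = 1/2, a_n = 1 - 1/n, X_t = Σ_{n: a_n ≤ t} (1/n)U_{2n}U_{2n+1}, F_t = σ({U_{2n} : n ≥ 1} ∪ {X_s : s ≤ t}). Then X is an (F_t)-martingale. -/

import Mathlib

open MeasureTheory ProbabilityTheory Filter Topology
open scoped ENNReal

namespace JumpMartAux

variable {Ω : Type*}

/-- The a.e. augmentation of a σ-algebra `G` w.r.t. a measure `P`. -/
def aeMS {m : MeasurableSpace Ω} (G : MeasurableSpace Ω) (P : @Measure Ω m) :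
    MeasurableSpace Ω where
  MeasurableSet' A := ∃ A', MeasurableSet[G] A' ∧ A =ᵐ[P] A'
  measurableSet_empty := ⟨∅, MeasurableSet.empty, Filter.EventuallyEq.rfl⟩
  measurableSet_compl := by
    rintro A ⟨A', hA', h⟩
    exact ⟨A'ᶜ, hA'.compl, h.compl⟩
  measurableSet_iUnion := by
    intro f hf
    choose g hg hae using hf
    exact ⟨⋃ i, g i, MeasurableSet.iUnion hg, EventuallyEq.countable_iUnion hae⟩

lemma le_aeMS {m : MeasurableSpace Ω} (G : MeasurableSpace Ω) (P : @Measure Ω m) :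
    G ≤ aeMS G P :=
  fun A hA => ⟨A, hA, Filter.EventuallyEq.rfl⟩

lemma indep_aeMS {m : MeasurableSpace Ω} {G H : MeasurableSpace Ω} {P : @Measure Ω m}
    (h : @Indep Ω G H m P) : @Indep Ω (aeMS G P) H m P := by
  rw [Indep_iff] at h ⊢
  rintro A B ⟨A', hA', hae⟩ hB
  have h1 : (A ∩ B : Set Ω) =ᵐ[P] (A' ∩ B : Set Ω) := hae.inter Filter.EventuallyEq.rfl
  rw [measure_congr h1, measure_congr hae, h A' B hA' hB]


end JumpMartAux

namespace JumpMartAux2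

variable {Ω : Type*}

noncomputable def cf (t : ℝ) (n : ℕ) : ℝ :=
  if 1 - 1/((n:ℝ)+1) ≤ t then 1/((n:ℝ)+1) else 0

def vf (U : ℕ → Ω → ℝ) (n : ℕ) (ω : Ω) : ℝ := U (2*(n+1)) ω * U (2*(n+1)+1) ω

noncomputable def Sf (U : ℕ → Ω → ℝ) (t : ℝ) (N : ℕ) (ω : Ω) : ℝ :=
  ∑ n ∈ Finset.range N, cf t n * vf U n ω

noncomputable def tailf (N : ℕ) : ℝ := ∑' k : ℕ, (1/(((k+N : ℕ):ℝ)+1))^2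

lemma summable_f : Summable (fun n : ℕ => (1/((n:ℝ)+1))^2) := by
  have h1 : Summable (fun n : ℕ => 1/((n:ℝ))^2) :=
    Real.summable_one_div_nat_pow.mpr one_lt_two
  have h2 := (summable_nat_add_iff 1).mpr h1
  exact h2.congr fun n => by push_cast; rw [div_pow, one_pow]

lemma summable_f_add (N : ℕ) : Summable (fun k : ℕ => (1/(((k+N : ℕ):ℝ)+1))^2) := by
  have := (summable_nat_add_iff (f := fun n : ℕ => (1/((n:ℝ)+1))^2) N).mpr summable_f
  exact this.congr fun k => by push_cast; ring_nf

lemma tailf_tendsto : Tendsto tailf atTop (𝓝 0) := by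
  have h := tendsto_sum_nat_add (f := fun n : ℕ => (1/((n:ℝ)+1))^2)
  refine h.congr fun N => ?_
  unfold tailf
  exact tsum_congr fun k => by push_cast; ring_nf

lemma tailf_nonneg (N : ℕ) : 0 ≤ tailf N :=
  tsum_nonneg fun k => sq_nonneg _

lemma cf_sq_le (t : ℝ) (n : ℕ) : (cf t n)^2 ≤ (1/((n:ℝ)+1))^2 := by
  unfold cf
  split
  · exact le_refl _
  · simpa using sq_nonneg (1/((n:ℝ)+1))
  
lemma sum_sq_le_tail (t : ℝ) (N M : ℕ) :
    ∑ n ∈ Finset.Ico N M, (cf t n)^2 ≤ tailf N := by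
  calc ∑ n ∈ Finset.Ico N M, (cf t n)^2
      ≤ ∑ n ∈ Finset.Ico N M, (1/((n:ℝ)+1))^2 :=
        Finset.sum_le_sum fun n _ => cf_sq_le t n
    _ = ∑ k ∈ Finset.range (M - N), (1/(((k+N : ℕ):ℝ)+1))^2 := by
        rw [Finset.sum_Ico_eq_sum_range]
        exact Finset.sum_congr rfl fun k _ => by push_cast; ring_nf
    _ ≤ tailf N :=
        Summable.sum_le_tsum _ (fun k _ => sq_nonneg _) (summable_f_add N)


variable {Ω : Type*} {m : MeasurableSpace Ω} {P : Measure Ω} [IsProbabilityMeasure P]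
  {U : ℕ → Ω → ℝ}

lemma absU (hval : ∀ k ω, U k ω = 1 ∨ U k ω = -1) (k : ℕ) (ω : Ω) : |U k ω| = 1 := by
  rcases hval k ω with h | h <;> rw [h] <;> norm_num

lemma Uint (hUmeas : ∀ k, Measurable (U k)) (hval : ∀ k ω, U k ω = 1 ∨ U k ω = -1) (k : ℕ) :
    Integrable (U k) P :=
  (integrable_const (1:ℝ)).mono' (hUmeas k).aestronglyMeasurable
    (ae_of_all _ fun ω => by rw [Real.norm_eq_abs, absU hval])

lemma EU (hUmeas : ∀ k, Measurable (U k)) (hval : ∀ k ω, U k ω = 1 ∨ U k ω = -1)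
    (hdist : ∀ k, P {ω | U k ω = 1} = 1/2 ∧ P {ω | U k ω = -1} = 1/2) (k : ℕ) :
    ∫ ω, U k ω ∂P = 0 := by
  have hA : MeasurableSet {ω | U k ω = 1} := (hUmeas k) (measurableSet_singleton 1)
  have hcompl : {ω | U k ω = 1}ᶜ = {ω | U k ω = -1} := by
    ext ω
    simp only [Set.mem_compl_iff, Set.mem_setOf_eq]
    rcases hval k ω with h | h <;> simp [h] <;> norm_num
  have h1 : ∫ ω in {ω | U k ω = 1}, U k ω ∂P = (1:ℝ)/2 := by
    rw [setIntegral_congr_fun hA (fun ω hω => hω)]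
    rw [setIntegral_const, measureReal_def, (hdist k).1]
    simp [ENNReal.toReal_div]
  have h2 : ∫ ω in {ω | U k ω = 1}ᶜ, U k ω ∂P = -(1:ℝ)/2 := by
    rw [hcompl]
    have hB : MeasurableSet {ω | U k ω = -1} := (hUmeas k) (measurableSet_singleton (-1))
    rw [setIntegral_congr_fun hB (fun ω hω => hω)]
    rw [setIntegral_const, measureReal_def, (hdist k).2]
    simp [ENNReal.toReal_div]
    ring
  rw [← integral_add_compl hA (Uint hUmeas hval k), h1, h2]
  ring

lemma vmeas (hUmeas : ∀ k, Measurable (U k)) (n : ℕ) : Measurable (vf U n) :=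
  (hUmeas _).mul (hUmeas _)

lemma absv (hval : ∀ k ω, U k ω = 1 ∨ U k ω = -1) (n : ℕ) (ω : Ω) : |vf U n ω| = 1 := by
  unfold vf; rw [abs_mul, absU hval, absU hval]; norm_num

lemma vsq (hval : ∀ k ω, U k ω = 1 ∨ U k ω = -1) (n : ℕ) (ω : Ω) :
    vf U n ω * vf U n ω = 1 := by
  rw [← abs_mul_abs_self, absv hval]; norm_num

lemma vint (hUmeas : ∀ k, Measurable (U k)) (hval : ∀ k ω, U k ω = 1 ∨ U k ω = -1) (n : ℕ) :
    Integrable (vf U n) P :=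
  (integrable_const (1:ℝ)).mono' (vmeas hUmeas n).aestronglyMeasurable
    (ae_of_all _ fun ω => by rw [Real.norm_eq_abs, absv hval])

lemma vvint (hUmeas : ∀ k, Measurable (U k)) (hval : ∀ k ω, U k ω = 1 ∨ U k ω = -1) (n l : ℕ) :
    Integrable (fun ω => vf U n ω * vf U l ω) P :=
  (integrable_const (1:ℝ)).mono'
    ((vmeas hUmeas n).mul (vmeas hUmeas l)).aestronglyMeasurable
    (ae_of_all _ fun ω => by
      rw [Real.norm_eq_abs, abs_mul, absv hval, absv hval]; norm_num)

lemma Ev (hUmeas : ∀ k, Measurable (U k))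
    (hindep : iIndepFun U P)
    (hval : ∀ k ω, U k ω = 1 ∨ U k ω = -1)
    (hdist : ∀ k, P {ω | U k ω = 1} = 1/2 ∧ P {ω | U k ω = -1} = 1/2) (n : ℕ) :
    ∫ ω, vf U n ω ∂P = 0 := by
  have hne : (2*(n+1) : ℕ) ≠ 2*(n+1)+1 := by omega
  have hIF : IndepFun (U (2*(n+1))) (U (2*(n+1)+1)) P := hindep.indepFun hne
  have := hIF.integral_mul_eq_mul_integral (Uint hUmeas hval _).1 (Uint hUmeas hval _).1
  unfold vf
  calc ∫ ω, U (2*(n+1)) ω * U (2*(n+1)+1) ω ∂P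
      = ∫ ω, (U (2*(n+1)) * U (2*(n+1)+1)) ω ∂P := rfl
    _ = (∫ ω, U (2*(n+1)) ω ∂P) * ∫ ω, U (2*(n+1)+1) ω ∂P := this
    _ = 0 := by rw [EU hUmeas hval hdist]; ring

lemma Evv (hUmeas : ∀ k, Measurable (U k))
    (hindep : iIndepFun U P)
    (hval : ∀ k ω, U k ω = 1 ∨ U k ω = -1)
    (hdist : ∀ k, P {ω | U k ω = 1} = 1/2 ∧ P {ω | U k ω = -1} = 1/2)
    {n l : ℕ} (hnl : n ≠ l) :
    ∫ ω, vf U n ω * vf U l ω ∂P = 0 := by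
  have hIF : IndepFun (U (2*(n+1)) * U (2*(n+1)+1)) (U (2*(l+1)) * U (2*(l+1)+1)) P := by
    apply hindep.indepFun_mul_mul hUmeas <;> omega
  have h := hIF.integral_mul_eq_mul_integral (vint hUmeas hval n).1 (vint hUmeas hval l).1
  calc ∫ ω, vf U n ω * vf U l ω ∂P
      = (∫ ω, vf U n ω ∂P) * ∫ ω, vf U l ω ∂P := h
    _ = 0 := by rw [Ev hUmeas hindep hval hdist]; ring


lemma prod_int (hUmeas : ∀ k, Measurable (U k)) (hval : ∀ k ω, U k ω = 1 ∨ U k ω = -1)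
    (t : ℝ) (n l : ℕ) :
    Integrable (fun ω => (cf t n * vf U n ω) * (cf t l * vf U l ω)) P := by
  have h := (vvint (P := P) hUmeas hval n l).const_mul (cf t n * cf t l)
  have he : (fun ω => (cf t n * vf U n ω) * (cf t l * vf U l ω))
      = fun ω => (cf t n * cf t l) * (vf U n ω * vf U l ω) := funext fun ω => by ring
  rw [he]; exact h

lemma sumsq_int (hUmeas : ∀ k, Measurable (U k)) (hval : ∀ k ω, U k ω = 1 ∨ U k ω = -1)
    (t : ℝ) (F : Finset ℕ) :
    Integrable (fun ω => (∑ n ∈ F, cf t n * vf U n ω)^2) P := by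
  have hexp : (fun ω => (∑ n ∈ F, cf t n * vf U n ω)^2)
      = fun ω => ∑ n ∈ F, ∑ l ∈ F, (cf t n * vf U n ω) * (cf t l * vf U l ω) := by
    funext ω; rw [sq, Finset.sum_mul_sum]
  rw [hexp]
  exact integrable_finset_sum _ fun n _ =>
    integrable_finset_sum _ fun l _ => prod_int hUmeas hval t n l

lemma ESq (hUmeas : ∀ k, Measurable (U k))
    (hindep : iIndepFun U P)
    (hval : ∀ k ω, U k ω = 1 ∨ U k ω = -1)
    (hdist : ∀ k, P {ω | U k ω = 1} = 1/2 ∧ P {ω | U k ω = -1} = 1/2)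
    (t : ℝ) (F : Finset ℕ) :
    ∫ ω, (∑ n ∈ F, cf t n * vf U n ω)^2 ∂P = ∑ n ∈ F, (cf t n)^2 := by
  have hexp : (fun ω => (∑ n ∈ F, cf t n * vf U n ω)^2)
      = fun ω => ∑ n ∈ F, ∑ l ∈ F, (cf t n * vf U n ω) * (cf t l * vf U l ω) := by
    funext ω; rw [sq, Finset.sum_mul_sum]
  rw [hexp, integral_finset_sum _ (fun n _ =>
    integrable_finset_sum _ fun l _ => prod_int hUmeas hval t n l)]
  refine Finset.sum_congr rfl fun n hn => ?_
  rw [integral_finset_sum _ (fun l _ => prod_int hUmeas hval t n l)]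
  have hterm : ∀ l, ∫ ω, (cf t n * vf U n ω) * (cf t l * vf U l ω) ∂P
      = if n = l then (cf t n)^2 else 0 := by
    intro l
    have he : (fun ω => (cf t n * vf U n ω) * (cf t l * vf U l ω))
        = fun ω => (cf t n * cf t l) * (vf U n ω * vf U l ω) := funext fun ω => by ring
    rw [he, integral_const_mul]
    by_cases hnl : n = l
    · subst hnl
      have h1 : ∫ ω, vf U n ω * vf U n ω ∂P = 1 := by
        have h2 : (fun ω => vf U n ω * vf U n ω) = fun _ => (1:ℝ) :=
          funext fun ω => vsq hval n ω
        rw [h2, integral_const]; simp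
      rw [h1, if_pos rfl]; ring
    · rw [Evv hUmeas hindep hval hdist hnl, if_neg hnl]; ring
  simp_rw [hterm]
  rw [Finset.sum_ite_eq F n (fun _ => (cf t n)^2), if_pos hn]

lemma Sf_meas (hUmeas : ∀ k, Measurable (U k)) (t : ℝ) (N : ℕ) : Measurable (Sf U t N) :=
  Finset.measurable_sum _ fun n _ => ((vmeas hUmeas n).const_mul _)

lemma Sf_int (hUmeas : ∀ k, Measurable (U k)) (hval : ∀ k ω, U k ω = 1 ∨ U k ω = -1)
    (t : ℝ) (N : ℕ) : Integrable (Sf U t N) P :=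
  integrable_finset_sum _ fun n _ => (vint hUmeas hval n).const_mul _


lemma g2_bound (hUmeas : ∀ k, Measurable (U k))
    (hindep : iIndepFun U P)
    (hval : ∀ k ω, U k ω = 1 ∨ U k ω = -1)
    (hdist : ∀ k, P {ω | U k ω = 1} = 1/2 ∧ P {ω | U k ω = -1} = 1/2)
    {X : Ω → ℝ} {t : ℝ}
    (hconv : ∀ᵐ ω ∂P, Tendsto (fun N => Sf U t N ω) atTop (𝓝 (X ω))) (N : ℕ) :
    ∫⁻ ω, ENNReal.ofReal ((X ω - Sf U t N ω)^2) ∂P ≤ ENNReal.ofReal (tailf N) := by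
  have hae : ∀ᵐ ω ∂P, ENNReal.ofReal ((X ω - Sf U t N ω)^2)
      = liminf (fun M => ENNReal.ofReal ((Sf U t M ω - Sf U t N ω)^2)) atTop := by
    filter_upwards [hconv] with ω hω
    have h1 : Tendsto (fun M => (Sf U t M ω - Sf U t N ω)^2) atTop
        (𝓝 ((X ω - Sf U t N ω)^2)) := (hω.sub tendsto_const_nhds).pow 2
    have h2 := (ENNReal.continuous_ofReal.tendsto _).comp h1
    exact h2.liminf_eq.symm
  rw [lintegral_congr_ae hae]
  refine le_trans (lintegral_liminf_le fun M => ?_) ?_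
  · exact ENNReal.measurable_ofReal.comp
      (((Sf_meas hUmeas t M).sub (Sf_meas hUmeas t N)).pow_const 2)
  · apply liminf_le_of_frequently_le'
    refine ((eventually_ge_atTop N).mono fun M hM => ?_).frequently
    have hsub : ∀ ω : Ω, (Sf U t M ω - Sf U t N ω)^2
        = (∑ n ∈ Finset.Ico N M, cf t n * vf U n ω)^2 := by
      intro ω
      unfold Sf
      rw [Finset.sum_Ico_eq_sub _ hM]
    calc ∫⁻ ω, ENNReal.ofReal ((Sf U t M ω - Sf U t N ω)^2) ∂P
        = ∫⁻ ω, ENNReal.ofReal ((∑ n ∈ Finset.Ico N M, cf t n * vf U n ω)^2) ∂P :=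
          lintegral_congr fun ω => by rw [hsub ω]
      _ = ENNReal.ofReal (∫ ω, (∑ n ∈ Finset.Ico N M, cf t n * vf U n ω)^2 ∂P) :=
          (ofReal_integral_eq_lintegral_ofReal (sumsq_int hUmeas hval t _)
            (ae_of_all _ fun ω => sq_nonneg _)).symm
      _ = ENNReal.ofReal (∑ n ∈ Finset.Ico N M, (cf t n)^2) := by
          rw [ESq hUmeas hindep hval hdist t _]
      _ ≤ ENNReal.ofReal (tailf N) := ENNReal.ofReal_le_ofReal (sum_sq_le_tail t N M)

lemma Dsq_int_and_bound (hUmeas : ∀ k, Measurable (U k))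
    (hindep : iIndepFun U P)
    (hval : ∀ k ω, U k ω = 1 ∨ U k ω = -1)
    (hdist : ∀ k, P {ω | U k ω = 1} = 1/2 ∧ P {ω | U k ω = -1} = 1/2)
    {X : Ω → ℝ} (hXm : Measurable X) {t : ℝ}
    (hconv : ∀ᵐ ω ∂P, Tendsto (fun N => Sf U t N ω) atTop (𝓝 (X ω))) (N : ℕ) :
    Integrable (fun ω => (X ω - Sf U t N ω)^2) P ∧
      ∫ ω, (X ω - Sf U t N ω)^2 ∂P ≤ tailf N := by
  have hg2 := g2_bound hUmeas hindep hval hdist hconv N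
  have hmeas : Measurable (fun ω => (X ω - Sf U t N ω)^2) :=
    (hXm.sub (Sf_meas hUmeas t N)).pow_const 2
  have hint : Integrable (fun ω => (X ω - Sf U t N ω)^2) P := by
    refine ⟨hmeas.aestronglyMeasurable, ?_⟩
    rw [hasFiniteIntegral_iff_ofReal (ae_of_all _ fun ω => sq_nonneg _)]
    exact lt_of_le_of_lt hg2 ENNReal.ofReal_lt_top
  refine ⟨hint, ?_⟩
  rw [integral_eq_lintegral_of_nonneg_ae (ae_of_all _ fun ω => sq_nonneg _)
    hmeas.aestronglyMeasurable]
  calc (∫⁻ ω, ENNReal.ofReal ((X ω - Sf U t N ω)^2) ∂P).toReal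
      ≤ (ENNReal.ofReal (tailf N)).toReal :=
        ENNReal.toReal_mono ENNReal.ofReal_ne_top hg2
    _ = tailf N := ENNReal.toReal_ofReal (tailf_nonneg N)

lemma X_integrable (hUmeas : ∀ k, Measurable (U k))
    (hindep : iIndepFun U P)
    (hval : ∀ k ω, U k ω = 1 ∨ U k ω = -1)
    (hdist : ∀ k, P {ω | U k ω = 1} = 1/2 ∧ P {ω | U k ω = -1} = 1/2)
    {X : Ω → ℝ} (hXm : Measurable X) {t : ℝ}
    (hconv : ∀ᵐ ω ∂P, Tendsto (fun N => Sf U t N ω) atTop (𝓝 (X ω))) :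
    Integrable X P := by
  have hg2 := g2_bound hUmeas hindep hval hdist hconv 0
  have hS0 : ∀ ω : Ω, Sf U t 0 ω = 0 := fun ω => by unfold Sf; simp
  refine ⟨hXm.aestronglyMeasurable, ?_⟩
  have hb : ∫⁻ ω, ‖X ω‖ₑ ∂P ≤ 1 + ENNReal.ofReal (tailf 0) := by
    have hpt : ∀ ω, ‖X ω‖ₑ ≤ 1 + ENNReal.ofReal ((X ω - Sf U t 0 ω)^2) := by
      intro ω
      rw [Real.enorm_eq_ofReal_abs, hS0 ω, sub_zero]
      calc ENNReal.ofReal |X ω| ≤ ENNReal.ofReal (1 + (X ω)^2) :=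
            ENNReal.ofReal_le_ofReal
              (by nlinarith [sq_nonneg (|X ω| - 1), sq_abs (X ω), abs_nonneg (X ω)])
        _ = 1 + ENNReal.ofReal ((X ω)^2) := by
            rw [ENNReal.ofReal_add zero_le_one (sq_nonneg _), ENNReal.ofReal_one]
    calc ∫⁻ ω, ‖X ω‖ₑ ∂P
        ≤ ∫⁻ ω, (1 + ENNReal.ofReal ((X ω - Sf U t 0 ω)^2)) ∂P := lintegral_mono hpt
      _ = ∫⁻ _, (1:ℝ≥0∞) ∂P + ∫⁻ ω, ENNReal.ofReal ((X ω - Sf U t 0 ω)^2) ∂P :=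
          lintegral_add_left measurable_const _
      _ ≤ 1 + ENNReal.ofReal (tailf 0) := by
          rw [lintegral_one, measure_univ]; exact add_le_add le_rfl hg2
  exact lt_of_le_of_lt hb
    (ENNReal.add_lt_top.mpr ⟨ENNReal.one_lt_top, ENNReal.ofReal_lt_top⟩)

lemma L1_tendsto (hUmeas : ∀ k, Measurable (U k))
    (hindep : iIndepFun U P)
    (hval : ∀ k ω, U k ω = 1 ∨ U k ω = -1)
    (hdist : ∀ k, P {ω | U k ω = 1} = 1/2 ∧ P {ω | U k ω = -1} = 1/2)
    {X : Ω → ℝ} (hXm : Measurable X) {t : ℝ}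
    (hconv : ∀ᵐ ω ∂P, Tendsto (fun N => Sf U t N ω) atTop (𝓝 (X ω))) :
    Tendsto (fun N => ∫ ω, |X ω - Sf U t N ω| ∂P) atTop (𝓝 0) := by
  have hXint := X_integrable hUmeas hindep hval hdist hXm hconv
  have hDint : ∀ N, Integrable (fun ω => X ω - Sf U t N ω) P :=
    fun N => hXint.sub (Sf_int hUmeas hval t N)
  have habs : ∀ N, Integrable (fun ω => |X ω - Sf U t N ω|) P := fun N => (hDint N).abs
  have key : ∀ ε : ℝ, 0 < ε → ∀ N, ∫ ω, |X ω - Sf U t N ω| ∂P ≤ ε + tailf N / ε := by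
    intro ε hε N
    obtain ⟨hint, hbound⟩ := Dsq_int_and_bound hUmeas hindep hval hdist hXm hconv N
    have hpt : ∀ ω, |X ω - Sf U t N ω| ≤ ε + (X ω - Sf U t N ω)^2 / ε := by
      intro ω
      have h2 : ε * |X ω - Sf U t N ω| ≤ ε^2 + (X ω - Sf U t N ω)^2 := by
        nlinarith [sq_nonneg (|X ω - Sf U t N ω| - ε), sq_abs (X ω - Sf U t N ω)]
      calc |X ω - Sf U t N ω| = (ε * |X ω - Sf U t N ω|)/ε := by field_simp
        _ ≤ (ε^2 + (X ω - Sf U t N ω)^2)/ε := by gcongr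
        _ = ε + (X ω - Sf U t N ω)^2 / ε := by field_simp
    calc ∫ ω, |X ω - Sf U t N ω| ∂P
        ≤ ∫ ω, (ε + (X ω - Sf U t N ω)^2 / ε) ∂P :=
          integral_mono (habs N) ((integrable_const ε).add (hint.div_const ε)) hpt
      _ = ε + (∫ ω, (X ω - Sf U t N ω)^2 ∂P)/ε := by
          rw [integral_add (integrable_const ε) (hint.div_const ε), integral_const,
            probReal_univ, smul_eq_mul, one_mul, integral_div]
      _ ≤ ε + tailf N / ε := by gcongr
  rw [Metric.tendsto_atTop]
  intro ε hε
  obtain ⟨N₀, hN₀⟩ := (Metric.tendsto_atTop.1 tailf_tendsto) (ε^2/4) (by positivity)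
  refine ⟨N₀, fun N hN => ?_⟩
  have htail : tailf N < ε^2/4 := by
    have := hN₀ N hN
    rwa [Real.dist_eq, sub_zero, abs_of_nonneg (tailf_nonneg N)] at this
  have h3 := key (ε/2) (by positivity) N
  have h4 : 0 ≤ ∫ ω, |X ω - Sf U t N ω| ∂P := integral_nonneg fun ω => abs_nonneg _
  rw [Real.dist_eq, sub_zero, abs_of_nonneg h4]
  have h5 : tailf N / (ε/2) < ε/2 := by
    rw [div_lt_iff₀ (by positivity)]
    nlinarith [htail]
  linarith


def sigmaExcept (U : ℕ → Ω → ℝ) (k : ℕ) : MeasurableSpace Ω :=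
  ⨆ j ∈ ({k}ᶜ : Set ℕ), MeasurableSpace.comap (U j) inferInstance

lemma key_setIntegral {mm : MeasurableSpace Ω} {P : Measure Ω} [IsProbabilityMeasure P]
    {U : ℕ → Ω → ℝ}
    (hUmeas : ∀ k, Measurable (U k))
    (hindep : iIndepFun U P)
    (hval : ∀ k ω, U k ω = 1 ∨ U k ω = -1)
    (hdist : ∀ k, P {ω | U k ω = 1} = 1/2 ∧ P {ω | U k ω = -1} = 1/2)
    {X : ℝ → Ω → ℝ} (hXmeas : ∀ r, Measurable (X r))
    {s : ℝ}
    (hconv : ∀ r : ℝ, 0 ≤ r → ∀ᵐ ω ∂P, Tendsto (fun N => Sf U r N ω) atTop (𝓝 (X r ω)))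
    {Fs : MeasurableSpace Ω}
    (hFs : Fs = (⨆ n : ℕ, MeasurableSpace.comap (U (2 * (n + 1))) inferInstance) ⊔
          (⨆ r ∈ Set.Icc (0:ℝ) s, MeasurableSpace.comap (X r) inferInstance))
    {n : ℕ} (hn : ¬(1 - 1/((n:ℝ)+1) ≤ s))
    {A : Set Ω} (hA : MeasurableSet[Fs] A) :
    ∫ ω in A, vf U n ω ∂P = 0 := by
  have hFsm : Fs ≤ mm := by
    rw [hFs]
    exact sup_le (iSup_le fun p => (hUmeas _).comap_le)
      (iSup₂_le fun r _ => (hXmeas r).comap_le)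
  set k := 2*(n+1)+1 with hk
  have hcomap_le : ∀ j : ℕ, j ≠ k →
      MeasurableSpace.comap (U j) inferInstance ≤ sigmaExcept U k := by
    intro j hj
    exact le_biSup (fun j => MeasurableSpace.comap (U j) inferInstance)
      (show j ∈ ({k}ᶜ : Set ℕ) from hj)
  have hUmG : ∀ j : ℕ, j ≠ k → Measurable[sigmaExcept U k] (U j) := fun j hj =>
    Measurable.of_comap_le (hcomap_le j hj)
  have hSmG : ∀ r : ℝ, r ≤ s → ∀ N, Measurable[sigmaExcept U k] (Sf U r N) := by
    intro r hr N
    unfold Sf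
    apply Finset.measurable_sum
    intro p _
    by_cases hp : 1 - 1/((p:ℝ)+1) ≤ r
    · have hpn : p ≠ n := by
        rintro rfl
        exact hn (le_trans hp hr)
      have h1 : (2*(p+1) : ℕ) ≠ k := by omega
      have h2 : (2*(p+1)+1 : ℕ) ≠ k := by omega
      exact ((hUmG _ h1).mul (hUmG _ h2)).const_mul _
    · have hz : (fun ω => cf r p * vf U p ω) = fun _ => (0:ℝ) := by
        funext ω; unfold cf; rw [if_neg hp]; ring
      rw [hz]; exact measurable_const
  have hindepGk : Indep (sigmaExcept U k) (MeasurableSpace.comap (U k) inferInstance) P := by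
    have hle : ∀ j : ℕ, MeasurableSpace.comap (U j) inferInstance ≤ mm :=
      fun j => (hUmeas j).comap_le
    have h := indep_biSup_compl hle hindep.iIndep ({k}ᶜ)
    refine indep_of_indep_of_le_right h ?_
    have hkmem : k ∈ (({k}ᶜ : Set ℕ)ᶜ : Set ℕ) := by simp
    exact le_biSup (fun j => MeasurableSpace.comap (U j) inferInstance) hkmem
  have hYle : Fs ≤ JumpMartAux.aeMS (sigmaExcept U k) P := by
    rw [hFs]
    refine sup_le (iSup_le fun p => ?_) (iSup₂_le fun r hr => ?_)
    · exact le_trans (hcomap_le _ (by omega)) (JumpMartAux.le_aeMS (sigmaExcept U k) P)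
    · rintro B ⟨T, hT, rfl⟩
      refine ⟨(fun ω => liminf (fun N => Sf U r N ω) atTop) ⁻¹' T, ?_, ?_⟩
      · exact (Measurable.liminf (fun N => hSmG r hr.2 N)) hT
      · have hxy : X r =ᵐ[P] fun ω => liminf (fun N => Sf U r N ω) atTop := by
          filter_upwards [hconv r hr.1] with ω h using (h.liminf_eq).symm
        exact hxy.preimage T
  have hindepFs : Indep Fs (MeasurableSpace.comap (U k) inferInstance) P :=
    indep_of_indep_of_le_left (JumpMartAux.indep_aeMS hindepGk) hYle
  have hAm : MeasurableSet[mm] A := hFsm A hA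
  have hUeFs : Measurable[Fs] (U (2*(n+1))) := by
    apply Measurable.of_comap_le
    rw [hFs]
    exact le_trans
      (le_iSup (fun p : ℕ => MeasurableSpace.comap (U (2*(p+1))) inferInstance) n)
      le_sup_left
  have hgFs : Measurable[Fs] (A.indicator (U (2*(n+1)))) := hUeFs.indicator hA
  have hIF : IndepFun (A.indicator (U (2*(n+1)))) (U k) P := by
    rw [indepFun_iff_measure_inter_preimage_eq_mul]
    intro s1 s2 h1 h2
    exact (Indep_iff _ _ _).1 hindepFs _ _ (hgFs h1) ⟨s2, h2, rfl⟩
  clear hgFs hUeFs hindepFs hYle hA hFs hSmG hUmG hcomap_le hindepGk hn hconv hFsm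
  clear Fs
  have hgint : Integrable (A.indicator (U (2*(n+1)))) P :=
    (Uint hUmeas hval _).indicator hAm
  have hmul := hIF.integral_mul_eq_mul_integral hgint.1 (Uint hUmeas hval k).1
  have hEq : ∀ ω, A.indicator (vf U n) ω = A.indicator (U (2*(n+1))) ω * U k ω := by
    intro ω
    by_cases hω : ω ∈ A
    · simp [Set.indicator_of_mem hω, vf, hk]
    · simp [Set.indicator_of_notMem hω]
  calc ∫ ω in A, vf U n ω ∂P
      = ∫ ω, A.indicator (vf U n) ω ∂P := (integral_indicator hAm).symm
    _ = ∫ ω, A.indicator (U (2*(n+1))) ω * U k ω ∂P := by simp_rw [hEq]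
    _ = (∫ ω, A.indicator (U (2*(n+1))) ω ∂P) * ∫ ω, U k ω ∂P := hmul
    _ = 0 := by rw [EU hUmeas hval hdist k]; ring

end JumpMartAux2

open JumpMartAux2 in
/-- Let `U_k` be i.i.d. symmetric `±1`-valued, `a_n = 1 - 1/n`, and `X_t` the (a.s. convergent)
sum `Σ_{n : a_n ≤ t} (1/n) U_{2n} U_{2n+1}`. With
`F_t = σ({U_{2n} : n ≥ 1} ∪ {X_s : s ≤ t})`, the process `X` is an `(F_t)`-martingale. -/
theorem jump_process_martingale
    {Ω : Type*} {m : MeasurableSpace Ω} (P : Measure Ω) [IsProbabilityMeasure P]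
    (U : ℕ → Ω → ℝ)
    (hUmeas : ∀ k, Measurable (U k))
    (hindep : iIndepFun U P)
    (hval : ∀ k ω, U k ω = 1 ∨ U k ω = -1)
    (hdist : ∀ k, P {ω | U k ω = 1} = 1/2 ∧ P {ω | U k ω = -1} = 1/2)
    (X : ℝ → Ω → ℝ) (hXmeas : ∀ t, Measurable (X t))
    (hX : ∀ t : ℝ, 0 ≤ t → ∀ᵐ ω ∂P,
      Tendsto (fun N : ℕ => ∑ n ∈ Finset.range N,
          if 1 - 1 / ((n:ℝ) + 1) ≤ t then
            (1 / ((n:ℝ) + 1)) * (U (2 * (n + 1)) ω * U (2 * (n + 1) + 1) ω)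
          else 0)
        atTop (nhds (X t ω)))
    (F : ℝ → MeasurableSpace Ω)
    (hF : ∀ t : ℝ, F t =
      (⨆ n : ℕ, MeasurableSpace.comap (U (2 * (n + 1))) inferInstance) ⊔
        (⨆ s ∈ Set.Icc (0:ℝ) t, MeasurableSpace.comap (X s) inferInstance)) :
    (∀ t : ℝ, 0 ≤ t → Integrable (X t) P) ∧
    (∀ s t : ℝ, 0 ≤ s → s ≤ t → P[X t|F s] =ᵐ[P] X s) := by
  classical
  have hX' : ∀ t : ℝ, 0 ≤ t → ∀ᵐ ω ∂P,
      Tendsto (fun N => Sf U t N ω) atTop (𝓝 (X t ω)) := by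
    intro t ht
    filter_upwards [hX t ht] with ω h
    have he : (fun N => Sf U t N ω) = (fun N : ℕ => ∑ n ∈ Finset.range N,
        if 1 - 1 / ((n:ℝ) + 1) ≤ t then
          (1 / ((n:ℝ) + 1)) * (U (2 * (n + 1)) ω * U (2 * (n + 1) + 1) ω) else 0) := by
      funext N
      unfold Sf
      refine Finset.sum_congr rfl fun n _ => ?_
      by_cases hcond : 1 - 1/((n:ℝ)+1) ≤ t
      · simp [cf, vf, hcond]
      · simp [cf, vf, hcond]
    rw [he]; exact h
  have hFm : ∀ r : ℝ, F r ≤ m := by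
    intro r; rw [hF r]
    exact sup_le (iSup_le fun p => (hUmeas _).comap_le)
      (iSup₂_le fun u _ => (hXmeas u).comap_le)
  have hXint : ∀ t : ℝ, 0 ≤ t → Integrable (X t) P :=
    fun t ht => X_integrable hUmeas hindep hval hdist (hXmeas t) (hX' t ht)
  refine ⟨hXint, ?_⟩
  intro s t hs hst
  have ht : 0 ≤ t := hs.trans hst
  haveI : SigmaFinite (P.trim (hFm s)) := inferInstance
  refine (ae_eq_condExp_of_forall_setIntegral_eq (hFm s) (hXint t ht)
    (fun A _ _ => (hXint s hs).integrableOn) ?_ ?_).symm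
  · intro A hA _
    have hAmeas : MeasurableSet A := hFm s A hA
    have hSS : ∀ N, ∫ ω in A, Sf U t N ω ∂P = ∫ ω in A, Sf U s N ω ∂P := by
      intro N
      have hsum : ∀ r : ℝ, ∫ ω in A, Sf U r N ω ∂P
          = ∑ n ∈ Finset.range N, cf r n * ∫ ω in A, vf U n ω ∂P := by
        intro r
        unfold Sf
        rw [integral_finset_sum _
          (fun n _ => ((vint hUmeas hval n).const_mul _).integrableOn)]
        exact Finset.sum_congr rfl fun n _ => integral_const_mul _ _
      rw [hsum t, hsum s]
      refine Finset.sum_congr rfl fun n _ => ?_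
      by_cases hcs : 1 - 1/((n:ℝ)+1) ≤ s
      · have hct : 1 - 1/((n:ℝ)+1) ≤ t := hcs.trans hst
        unfold cf
        rw [if_pos hcs, if_pos hct]
      · rw [key_setIntegral hUmeas hindep hval hdist hXmeas hX' (hF s) hcs hA]
        ring
    have htend : ∀ r : ℝ, 0 ≤ r → Tendsto (fun N => ∫ ω in A, Sf U r N ω ∂P) atTop
        (𝓝 (∫ ω in A, X r ω ∂P)) := by
      intro r hr
      rw [tendsto_iff_dist_tendsto_zero]
      have hb : ∀ N, dist (∫ ω in A, Sf U r N ω ∂P) (∫ ω in A, X r ω ∂P)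
          ≤ ∫ ω, |X r ω - Sf U r N ω| ∂P := by
        intro N
        rw [Real.dist_eq]
        have h1 : ∫ ω in A, Sf U r N ω ∂P - ∫ ω in A, X r ω ∂P
            = ∫ ω in A, (Sf U r N ω - X r ω) ∂P :=
          (integral_sub ((Sf_int hUmeas hval r N).integrableOn)
            ((hXint r hr).integrableOn)).symm
        rw [h1]
        calc |∫ ω in A, (Sf U r N ω - X r ω) ∂P|
            ≤ ∫ ω in A, |Sf U r N ω - X r ω| ∂P := by
              simpa [Real.norm_eq_abs] using
                norm_integral_le_integral_norm (μ := P.restrict A)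
                  (fun ω => Sf U r N ω - X r ω)
          _ ≤ ∫ ω, |Sf U r N ω - X r ω| ∂P :=
              setIntegral_le_integral
                (((Sf_int hUmeas hval r N).sub (hXint r hr)).abs)
                (ae_of_all _ fun ω => abs_nonneg _)
          _ = ∫ ω, |X r ω - Sf U r N ω| ∂P := by simp_rw [abs_sub_comm]
      exact squeeze_zero (fun N => dist_nonneg) hb
        (L1_tendsto hUmeas hindep hval hdist (hXmeas r) (hX' r hr))
    have h1 := htend t ht
    have h2 := htend s hs
    rw [funext hSS] at h1
    exact tendsto_nhds_unique h2 h1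
  · have hcom : MeasurableSpace.comap (X s) inferInstance ≤ F s := by
      rw [hF s]
      refine le_trans ?_ le_sup_right
      exact le_biSup (fun r : ℝ => MeasurableSpace.comap (X r) inferInstance)
        (Set.mem_Icc.mpr ⟨hs, le_refl s⟩)
    exact ⟨X s, (Measurable.of_comap_le hcom).stronglyMeasurable,
      Filter.EventuallyEq.rfl⟩
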